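/- Let W : [0,1]² → [0,1] be an A₁-Lipschitz graphon and let Wₙ be the step graphon induced by sampling W at the n regularly spaced points uᵢ = (i−1)/n. Let T_W and T_{Wₙ} be the corresponding integral operators on L²([0,1]), and for k ≥ 1 let λ_k(T) = inf over subspaces S with dim S = k−1 of sup over unit X ∈ S^⊥ of ⟨T X, X⟩ denote the k-th Courant–Fischer min-max value. Then for every k ≥ 1, |λ_k(T_W) − λ_k(T_{Wₙ})| ≤ √(A₁)/√n. -/

import Mathlib

open Set MeasureTheory
open scoped RealInnerProductSpace ENNReal Classical

/-- Lebesgue measure restricted to the unit interval `[0,1]`. -/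
noncomputable def μ01 : Measure ℝ := volume.restrict (Icc (0:ℝ) 1)

/-- The integral operator with kernel `K` acting on `L²([0,1])`:
`(T_K X)(v) = ∫₀¹ K(u,v) X(u) du`. -/
noncomputable def kernelOp (K : ℝ → ℝ → ℝ) (X : Lp ℝ 2 μ01) : Lp ℝ 2 μ01 :=
  if h : MemLp (fun v => ∫ u, K u v * X u ∂μ01) 2 μ01 then
    h.toLp (fun v => ∫ u, K u v * X u ∂μ01)
  else 0

/-- The `k`-th Courant–Fischer min-max value of an operator `T` on `L²([0,1])`:
`λ_k(T) = inf_{S, dim S = k-1} sup_{X ∈ S^⊥, ‖X‖ = 1} ⟪T X, X⟫`. -/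
noncomputable def minmaxValue (T : Lp ℝ 2 μ01 → Lp ℝ 2 μ01) (k : ℕ) : ℝ :=
  ⨅ S : {S : Submodule ℝ (Lp ℝ 2 μ01) // Module.finrank ℝ S = k - 1},
    ⨆ X : {X : Lp ℝ 2 μ01 // X ∈ (S.1)ᗮ ∧ ‖X‖ = 1}, ⟪T X.1, X.1⟫

/-- The sample point associated to `u ∈ [0,1]` for the regular partition of `[0,1]` into `n`
intervals `Iᵢ = [(i-1)/n, i/n]`: for `u ∈ Iᵢ` this is `uᵢ = (i-1)/n` (for `u = 1` it is
`(n-1)/n`, i.e. `u = 1` is placed in the last interval `Iₙ`). -/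
noncomputable def samplePoint (n : ℕ) (u : ℝ) : ℝ :=
  ((min ⌊(n : ℝ) * u⌋ ((n : ℤ) - 1) : ℤ) : ℝ) / (n : ℝ)

instance : IsProbabilityMeasure μ01 := ⟨by simp [μ01]⟩

lemma minmax_abs_diff_le (T T' : Lp ℝ 2 μ01 → Lp ℝ 2 μ01) (k : ℕ) (ε C : ℝ)
    (hε : 0 ≤ ε)
    (hC : ∀ X : Lp ℝ 2 μ01, ‖X‖ = 1 → |⟪T X, X⟫| ≤ C)
    (hC' : ∀ X : Lp ℝ 2 μ01, ‖X‖ = 1 → |⟪T' X, X⟫| ≤ C)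
    (hdiff : ∀ X : Lp ℝ 2 μ01, ‖X‖ = 1 → |⟪T X, X⟫ - ⟪T' X, X⟫| ≤ ε) :
    |minmaxValue T k - minmaxValue T' k| ≤ ε := by
  set ι := {S : Submodule ℝ (Lp ℝ 2 μ01) // Module.finrank ℝ S = k - 1}
  set f : ι → ℝ := fun S => ⨆ X : {X : Lp ℝ 2 μ01 // X ∈ (S.1)ᗮ ∧ ‖X‖ = 1}, ⟪T X.1, X.1⟫
  set g : ι → ℝ := fun S => ⨆ X : {X : Lp ℝ 2 μ01 // X ∈ (S.1)ᗮ ∧ ‖X‖ = 1}, ⟪T' X.1, X.1⟫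
  set M := max C 0 with hM
  have key : ∀ (S : ι), |f S - g S| ≤ ε ∧ |f S| ≤ M ∧ |g S| ≤ M := by
    intro S
    by_cases hne : Nonempty {X : Lp ℝ 2 μ01 // X ∈ (S.1)ᗮ ∧ ‖X‖ = 1}
    · haveI := hne
      have bddT : BddAbove (Set.range fun X : {X : Lp ℝ 2 μ01 // X ∈ (S.1)ᗮ ∧ ‖X‖ = 1} => ⟪T X.1, X.1⟫) := by
        refine ⟨C, ?_⟩; rintro _ ⟨X, rfl⟩; exact (abs_le.1 (hC X.1 X.2.2)).2
      have bddT' : BddAbove (Set.range fun X : {X : Lp ℝ 2 μ01 // X ∈ (S.1)ᗮ ∧ ‖X‖ = 1} => ⟪T' X.1, X.1⟫) := by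
        refine ⟨C, ?_⟩; rintro _ ⟨X, rfl⟩; exact (abs_le.1 (hC' X.1 X.2.2)).2
      obtain ⟨X₀⟩ := hne
      have hfC : f S ≤ C := ciSup_le fun X => (abs_le.1 (hC X.1 X.2.2)).2
      have hgC : g S ≤ C := ciSup_le fun X => (abs_le.1 (hC' X.1 X.2.2)).2
      have hfl : -C ≤ f S := le_trans (abs_le.1 (hC X₀.1 X₀.2.2)).1 (le_ciSup bddT X₀)
      have hgl : -C ≤ g S := le_trans (abs_le.1 (hC' X₀.1 X₀.2.2)).1 (le_ciSup bddT' X₀)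
      have h1 : f S ≤ g S + ε := by
        refine ciSup_le fun X => ?_
        have := (abs_le.1 (hdiff X.1 X.2.2)).2
        have h2 : ⟪T X.1, X.1⟫ ≤ ⟪T' X.1, X.1⟫ + ε := by linarith
        exact h2.trans (add_le_add_left (le_ciSup bddT' X) ε)
      have h2 : g S ≤ f S + ε := by
        refine ciSup_le fun X => ?_
        have := (abs_le.1 (hdiff X.1 X.2.2)).1
        have h2 : ⟪T' X.1, X.1⟫ ≤ ⟪T X.1, X.1⟫ + ε := by linarith
        exact h2.trans (add_le_add_left (le_ciSup bddT X) ε)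
      have hCM : C ≤ M := le_max_left _ _
      refine ⟨abs_sub_le_iff.2 ⟨by linarith, by linarith⟩, abs_le.2 ⟨by linarith, by linarith⟩,
        abs_le.2 ⟨by linarith, by linarith⟩⟩
    · have : IsEmpty {X : Lp ℝ 2 μ01 // X ∈ (S.1)ᗮ ∧ ‖X‖ = 1} := not_nonempty_iff.1 hne
      have hf0 : f S = 0 := Real.iSup_of_isEmpty _
      have hg0 : g S = 0 := Real.iSup_of_isEmpty _
      simp [hf0, hg0, hε, hM, le_max_right]
  by_cases hS : Nonempty ι
  · have bddf : BddBelow (Set.range f) := ⟨-M, by rintro _ ⟨S, rfl⟩; exact (abs_le.1 (key S).2.1).1⟩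
    have bddg : BddBelow (Set.range g) := ⟨-M, by rintro _ ⟨S, rfl⟩; exact (abs_le.1 (key S).2.2).1⟩
    have h1 : minmaxValue T k ≤ minmaxValue T' k + ε := by
      have : ∀ S : ι, minmaxValue T k - ε ≤ g S := by
        intro S
        have hfg := (abs_sub_le_iff.1 (key S).1).1
        have : minmaxValue T k ≤ f S := ciInf_le bddf S
        linarith
      have := le_ciInf this
      have hmm : minmaxValue T' k = ⨅ S, g S := rfl
      rw [hmm]; linarith
    have h2 : minmaxValue T' k ≤ minmaxValue T k + ε := by
      have : ∀ S : ι, minmaxValue T' k - ε ≤ f S := by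
        intro S
        have hfg := (abs_sub_le_iff.1 (key S).1).2
        have : minmaxValue T' k ≤ g S := ciInf_le bddg S
        linarith
      have := le_ciInf this
      have hmm : minmaxValue T k = ⨅ S, f S := rfl
      rw [hmm]; linarith
    exact abs_sub_le_iff.2 ⟨by linarith, by linarith⟩
  · have : IsEmpty ι := not_nonempty_iff.1 hS
    have h1 : minmaxValue T k = 0 := Real.iInf_of_isEmpty _
    have h2 : minmaxValue T' k = 0 := Real.iInf_of_isEmpty _
    simp [h1, h2, hε]

lemma ae_mem01 : ∀ᵐ u ∂μ01, u ∈ Icc (0:ℝ) 1 := ae_restrict_mem measurableSet_Icc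

lemma ae_mem01_prod : ∀ᵐ p : ℝ × ℝ ∂(μ01.prod μ01), p.1 ∈ Icc (0:ℝ) 1 ∧ p.2 ∈ Icc (0:ℝ) 1 := by
  have h0 : μ01 (Icc (0:ℝ) 1)ᶜ = 0 := by
    rw [Set.compl_def]; exact ae_iff.1 ae_mem01
  have h : (μ01.prod μ01) ((Icc (0:ℝ) 1 ×ˢ Icc (0:ℝ) 1 : Set (ℝ × ℝ)))ᶜ = 0 :=
    Measure.measure_prod_compl_eq_zero h0 h0
  have h2 : ∀ᵐ p : ℝ × ℝ ∂(μ01.prod μ01), p ∈ (Icc (0:ℝ) 1 ×ˢ Icc (0:ℝ) 1 : Set (ℝ × ℝ)) := by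
    rw [ae_iff, ← Set.compl_def]; exact h
  filter_upwards [h2] with p hp; exact ⟨hp.1, hp.2⟩

variable {K : ℝ → ℝ → ℝ} {X : Lp ℝ 2 μ01}

lemma X_integrable (X : Lp ℝ 2 μ01) : Integrable (X : ℝ → ℝ) μ01 :=
  (Lp.memLp X).integrable (by norm_num)

lemma X_abs_integrable (X : Lp ℝ 2 μ01) : Integrable (fun u => |(X : ℝ → ℝ) u|) μ01 :=
  (X_integrable X).abs

lemma aesm_F (hK : Measurable (Function.uncurry K)) (X : Lp ℝ 2 μ01) :
    AEStronglyMeasurable (fun p : ℝ × ℝ => K p.2 p.1 * (X : ℝ → ℝ) p.2 * (X : ℝ → ℝ) p.1)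
      (μ01.prod μ01) := by
  have h1 : Measurable fun p : ℝ × ℝ => K p.2 p.1 := hK.comp measurable_swap
  have h2 : AEStronglyMeasurable (fun p : ℝ × ℝ => (X : ℝ → ℝ) p.2) (μ01.prod μ01) :=
    (Lp.aestronglyMeasurable X).comp_quasiMeasurePreserving Measure.quasiMeasurePreserving_snd
  have h3 : AEStronglyMeasurable (fun p : ℝ × ℝ => (X : ℝ → ℝ) p.1) (μ01.prod μ01) :=
    (Lp.aestronglyMeasurable X).comp_quasiMeasurePreserving Measure.quasiMeasurePreserving_fst
  exact (h1.aestronglyMeasurable.mul h2).mul h3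

lemma integrable_F (hK : Measurable (Function.uncurry K))
    (hKb : ∀ u ∈ Icc (0:ℝ) 1, ∀ v ∈ Icc (0:ℝ) 1, |K u v| ≤ 1) (X : Lp ℝ 2 μ01) :
    Integrable (fun p : ℝ × ℝ => K p.2 p.1 * (X : ℝ → ℝ) p.2 * (X : ℝ → ℝ) p.1)
      (μ01.prod μ01) := by
  have hg : Integrable (fun p : ℝ × ℝ => |(X : ℝ → ℝ) p.1| * |(X : ℝ → ℝ) p.2|)
      (μ01.prod μ01) := (X_abs_integrable X).mul_prod (X_abs_integrable X)
  refine hg.mono' (aesm_F hK X) ?_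
  filter_upwards [ae_mem01_prod] with p hp
  have hb := hKb p.2 hp.2 p.1 hp.1
  simp only [Real.norm_eq_abs, abs_mul, abs_abs]
  calc |K p.2 p.1| * |(X : ℝ → ℝ) p.2| * |(X : ℝ → ℝ) p.1|
      ≤ 1 * |(X : ℝ → ℝ) p.2| * |(X : ℝ → ℝ) p.1| := by
        apply mul_le_mul_of_nonneg_right (mul_le_mul_of_nonneg_right hb (abs_nonneg _)) (abs_nonneg _)
    _ = |(X : ℝ → ℝ) p.1| * |(X : ℝ → ℝ) p.2| := by rw [one_mul, mul_comm]

lemma memℒp_kernel (hK : Measurable (Function.uncurry K))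
    (hKb : ∀ u ∈ Icc (0:ℝ) 1, ∀ v ∈ Icc (0:ℝ) 1, |K u v| ≤ 1) (X : Lp ℝ 2 μ01) :
    MemLp (fun v => ∫ u, K u v * (X : ℝ → ℝ) u ∂μ01) 2 μ01 := by
  set Cx : ℝ := ∫ u, |(X : ℝ → ℝ) u| ∂μ01 with hCx
  have hCx0 : 0 ≤ Cx := integral_nonneg fun u => abs_nonneg _
  have haesm : AEStronglyMeasurable (fun v => ∫ u, K u v * (X : ℝ → ℝ) u ∂μ01) μ01 := by
    have h1 : Measurable fun p : ℝ × ℝ => K p.2 p.1 := hK.comp measurable_swap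
    have h2 : AEStronglyMeasurable (fun p : ℝ × ℝ => (X : ℝ → ℝ) p.2) (μ01.prod μ01) :=
      (Lp.aestronglyMeasurable X).comp_quasiMeasurePreserving Measure.quasiMeasurePreserving_snd
    exact (h1.aestronglyMeasurable.mul h2).integral_prod_right'
  refine MemLp.of_le (memLp_const Cx) haesm ?_
  filter_upwards [ae_mem01] with v hv
  rw [Real.norm_eq_abs, Real.norm_eq_abs, abs_of_nonneg hCx0]
  calc |∫ u, K u v * (X : ℝ → ℝ) u ∂μ01| ≤ ∫ u, |K u v * (X : ℝ → ℝ) u| ∂μ01 := by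
        simpa only [Real.norm_eq_abs] using norm_integral_le_integral_norm (μ := μ01) (fun u => K u v * (X : ℝ → ℝ) u)
    _ ≤ Cx := by
        refine integral_mono_ae ?_ (X_abs_integrable X) ?_
        · refine (X_abs_integrable X).mono' ?_ ?_
          · have h1 : Measurable fun u : ℝ => K u v := by
              have := hK.comp (f := fun u : ℝ => (u, v)) (measurable_id.prodMk measurable_const)
              exact this
            exact (h1.aestronglyMeasurable.mul (Lp.aestronglyMeasurable X)).norm
          · filter_upwards [ae_mem01] with u hu
            have := hKb u hu v hv
            rw [Real.norm_eq_abs, abs_abs, abs_mul]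
            calc |K u v| * |(X : ℝ → ℝ) u| ≤ 1 * |(X : ℝ → ℝ) u| :=
                mul_le_mul_of_nonneg_right this (abs_nonneg _)
              _ = |(X : ℝ → ℝ) u| := one_mul _
        · filter_upwards [ae_mem01] with u hu
          have := hKb u hu v hv
          rw [abs_mul]
          calc |K u v| * |(X : ℝ → ℝ) u| ≤ 1 * |(X : ℝ → ℝ) u| :=
              mul_le_mul_of_nonneg_right this (abs_nonneg _)
            _ = |(X : ℝ → ℝ) u| := one_mul _

lemma integral_sq_eq_norm_sq (X : Lp ℝ 2 μ01) : ∫ u, (X : ℝ → ℝ) u ^ 2 ∂μ01 = ‖X‖ ^ 2 := by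
  rw [← real_inner_self_eq_norm_sq, MeasureTheory.L2.inner_def]
  refine integral_congr_ae (Filter.Eventually.of_forall fun u => ?_)
  simp [RCLike.inner_apply, conj_trivial, sq]

lemma inner_kernelOp (hK : Measurable (Function.uncurry K))
    (hKb : ∀ u ∈ Icc (0:ℝ) 1, ∀ v ∈ Icc (0:ℝ) 1, |K u v| ≤ 1) (X : Lp ℝ 2 μ01) :
    ⟪kernelOp K X, X⟫
      = ∫ z : ℝ × ℝ, K z.2 z.1 * (X : ℝ → ℝ) z.2 * (X : ℝ → ℝ) z.1 ∂(μ01.prod μ01) := by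
  have hmem := memℒp_kernel hK hKb X
  have h1 : kernelOp K X = hmem.toLp _ := by rw [kernelOp, dif_pos hmem]
  rw [h1, MeasureTheory.L2.inner_def]
  have h2 : ∀ᵐ v ∂μ01,
      (⟪(hmem.toLp _ : Lp ℝ 2 μ01) v, (X : ℝ → ℝ) v⟫ : ℝ)
        = (∫ u, K u v * (X : ℝ → ℝ) u ∂μ01) * (X : ℝ → ℝ) v := by
    filter_upwards [hmem.coeFn_toLp] with v hv
    simp [hv, RCLike.inner_apply, conj_trivial, mul_comm]
  rw [integral_congr_ae h2]
  have h3 : ∀ v : ℝ, (∫ u, K u v * (X : ℝ → ℝ) u ∂μ01) * (X : ℝ → ℝ) v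
      = ∫ u, K u v * (X : ℝ → ℝ) u * (X : ℝ → ℝ) v ∂μ01 := fun v =>
    (integral_mul_const _ _).symm
  rw [integral_congr_ae (Filter.Eventually.of_forall fun v => h3 v)]
  exact integral_integral (integrable_F hK hKb X)

lemma cs_bound {D : ℝ → ℝ → ℝ}
    (memD : MemLp (fun z : ℝ × ℝ => D z.2 z.1) 2 (μ01.prod μ01))
    (X : Lp ℝ 2 μ01) (hX : ‖X‖ = 1) :
    |∫ z : ℝ × ℝ, D z.2 z.1 * (X : ℝ → ℝ) z.2 * (X : ℝ → ℝ) z.1 ∂(μ01.prod μ01)|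
      ≤ Real.sqrt (∫ z : ℝ × ℝ, (D z.2 z.1) ^ 2 ∂(μ01.prod μ01)) := by
  set G : ℝ × ℝ → ℝ := fun z => (X : ℝ → ℝ) z.2 * (X : ℝ → ℝ) z.1 with hG
  have haesmG : AEStronglyMeasurable G (μ01.prod μ01) := by
    have h2 : AEStronglyMeasurable (fun p : ℝ × ℝ => (X : ℝ → ℝ) p.2) (μ01.prod μ01) :=
      (Lp.aestronglyMeasurable X).comp_quasiMeasurePreserving Measure.quasiMeasurePreserving_snd
    have h3 : AEStronglyMeasurable (fun p : ℝ × ℝ => (X : ℝ → ℝ) p.1) (μ01.prod μ01) :=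
      (Lp.aestronglyMeasurable X).comp_quasiMeasurePreserving Measure.quasiMeasurePreserving_fst
    exact h2.mul h3
  have hXsq : Integrable (fun u => (X : ℝ → ℝ) u ^ 2) μ01 := (Lp.memLp X).integrable_sq
  have memG : MemLp G 2 (μ01.prod μ01) := by
    rw [memLp_two_iff_integrable_sq haesmG]
    have : (fun z : ℝ × ℝ => G z ^ 2)
        = fun z : ℝ × ℝ => (X : ℝ → ℝ) z.1 ^ 2 * (X : ℝ → ℝ) z.2 ^ 2 :=
      funext fun z => by simp [hG]; ring
    rw [this]
    exact hXsq.mul_prod hXsq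
  set F₁ := memD.toLp _
  set F₂ := memG.toLp G
  have hinner : ⟪F₁, F₂⟫ = ∫ z : ℝ × ℝ, D z.2 z.1 * (X : ℝ → ℝ) z.2 * (X : ℝ → ℝ) z.1
      ∂(μ01.prod μ01) := by
    rw [MeasureTheory.L2.inner_def]
    refine integral_congr_ae ?_
    filter_upwards [memD.coeFn_toLp, memG.coeFn_toLp] with z h1 h2
    simp only [F₁, F₂, h1, h2, RCLike.inner_apply, conj_trivial]; simp only [hG]; ring
  have hF1 : ‖F₁‖ = Real.sqrt (∫ z : ℝ × ℝ, (D z.2 z.1) ^ 2 ∂(μ01.prod μ01)) := by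
    have h : ⟪F₁, F₁⟫ = ∫ z : ℝ × ℝ, (D z.2 z.1) ^ 2 ∂(μ01.prod μ01) := by
      rw [MeasureTheory.L2.inner_def]
      refine integral_congr_ae ?_
      filter_upwards [memD.coeFn_toLp] with z h1
      simp [F₁, h1, RCLike.inner_apply, conj_trivial, sq]
    rw [← h, real_inner_self_eq_norm_sq, Real.sqrt_sq (norm_nonneg _)]
  have hF2 : ‖F₂‖ = 1 := by
    have h : ⟪F₂, F₂⟫ = ∫ z : ℝ × ℝ, G z ^ 2 ∂(μ01.prod μ01) := by
      rw [MeasureTheory.L2.inner_def]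
      refine integral_congr_ae ?_
      filter_upwards [memG.coeFn_toLp] with z h1
      simp [F₂, h1, RCLike.inner_apply, conj_trivial, sq]
    have h2 : ∫ z : ℝ × ℝ, G z ^ 2 ∂(μ01.prod μ01) = 1 := by
      have : (fun z : ℝ × ℝ => G z ^ 2)
          = fun z : ℝ × ℝ => (X : ℝ → ℝ) z.1 ^ 2 * (X : ℝ → ℝ) z.2 ^ 2 :=
        funext fun z => by simp [hG]; ring
      rw [this, MeasureTheory.integral_prod_mul (f := fun u => (X : ℝ → ℝ) u ^ 2) (g := fun u => (X : ℝ → ℝ) u ^ 2), integral_sq_eq_norm_sq, hX]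
      norm_num
    have h3 : ‖F₂‖ ^ 2 = 1 := by rw [← real_inner_self_eq_norm_sq, h, h2]
    nlinarith [norm_nonneg F₂]
  calc |∫ z : ℝ × ℝ, D z.2 z.1 * (X : ℝ → ℝ) z.2 * (X : ℝ → ℝ) z.1 ∂(μ01.prod μ01)|
      = |⟪F₁, F₂⟫| := by rw [hinner]
    _ ≤ ‖F₁‖ * ‖F₂‖ := abs_real_inner_le_norm _ _
    _ = Real.sqrt (∫ z : ℝ × ℝ, (D z.2 z.1) ^ 2 ∂(μ01.prod μ01)) := by
        rw [hF1, hF2, mul_one]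

lemma measurable_samplePoint (n : ℕ) : Measurable (samplePoint n) := by
  have h1 : Measurable fun u : ℝ => (⌊(n : ℝ) * u⌋ : ℤ) :=
    (measurable_const.mul measurable_id).floor
  have h2 : Measurable fun u : ℝ => (min ⌊(n : ℝ) * u⌋ ((n : ℤ) - 1) : ℤ) :=
    h1.min measurable_const
  exact (measurable_from_top.comp h2).div measurable_const

lemma samplePoint_le {n : ℕ} (hn : 1 ≤ n) (u : ℝ) : samplePoint n u ≤ u := by
  have hn0 : (0:ℝ) < n := by exact_mod_cast Nat.pos_of_ne_zero (by omega)
  rw [samplePoint, div_le_iff₀ hn0]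
  have h1 : ((min ⌊(n : ℝ) * u⌋ ((n : ℤ) - 1) : ℤ) : ℝ) ≤ ((⌊(n : ℝ) * u⌋ : ℤ) : ℝ) := by
    exact_mod_cast min_le_left _ _
  calc ((min ⌊(n : ℝ) * u⌋ ((n : ℤ) - 1) : ℤ) : ℝ) ≤ ((⌊(n : ℝ) * u⌋ : ℤ) : ℝ) := h1
    _ ≤ (n : ℝ) * u := Int.floor_le _
    _ = u * n := mul_comm _ _

lemma samplePoint_mem {n : ℕ} (hn : 1 ≤ n) {u : ℝ} (hu : u ∈ Icc (0:ℝ) 1) :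
    samplePoint n u ∈ Icc (0:ℝ) 1 := by
  have hn0 : (0:ℝ) < n := by exact_mod_cast Nat.pos_of_ne_zero (by omega)
  rw [samplePoint]
  constructor
  · apply div_nonneg _ hn0.le
    have h1 : (0:ℤ) ≤ ⌊(n : ℝ) * u⌋ := Int.floor_nonneg.2 (mul_nonneg hn0.le hu.1)
    have h2 : (0:ℤ) ≤ (n : ℤ) - 1 := by omega
    exact_mod_cast le_min h1 h2
  · rw [div_le_one hn0]
    have h2 : ((min ⌊(n : ℝ) * u⌋ ((n : ℤ) - 1) : ℤ) : ℝ) ≤ (((n : ℤ) - 1 : ℤ) : ℝ) := by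
      exact_mod_cast min_le_right _ _
    calc ((min ⌊(n : ℝ) * u⌋ ((n : ℤ) - 1) : ℤ) : ℝ) ≤ (((n : ℤ) - 1 : ℤ) : ℝ) := h2
      _ ≤ (n : ℝ) := by push_cast; linarith

lemma samplePoint_eq {n : ℕ} (hn : 1 ≤ n) {i : ℕ} (hi : i < n) {u : ℝ}
    (hu : u ∈ Ico ((i : ℝ) / n) (((i : ℝ) + 1) / n)) :
    samplePoint n u = (i : ℝ) / n := by
  have hn0 : (0:ℝ) < n := by exact_mod_cast Nat.pos_of_ne_zero (by omega)
  have h1 : (i : ℝ) ≤ (n : ℝ) * u := by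
    have := hu.1; rw [div_le_iff₀ hn0] at this; linarith [mul_comm u (n:ℝ)]
  have h2 : (n : ℝ) * u < (i : ℝ) + 1 := by
    have := hu.2; rw [lt_div_iff₀ hn0] at this; linarith [mul_comm u (n:ℝ)]
  have hfloor : ⌊(n : ℝ) * u⌋ = (i : ℤ) := by
    rw [Int.floor_eq_iff]
    constructor <;> push_cast <;> linarith
  have hmin : min ⌊(n : ℝ) * u⌋ ((n : ℤ) - 1) = (i : ℤ) := by
    rw [hfloor]; apply min_eq_left; omega
  rw [samplePoint, hmin]; norm_num

lemma sample_integral {n : ℕ} (hn : 1 ≤ n) :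
    ∫ u, (u - samplePoint n u) ∂μ01 ≤ 1 / (2 * n) := by
  have hn0 : (0:ℝ) < n := by exact_mod_cast Nat.pos_of_ne_zero (by omega)
  have hμ : (∫ u, (u - samplePoint n u) ∂μ01)
      = ∫ u in Icc (0:ℝ) 1, (u - samplePoint n u) := rfl
  rw [hμ, integral_Icc_eq_integral_Ico]
  have hunion : Ico (0:ℝ) 1 = ⋃ i ∈ Finset.range n, Ico ((i : ℝ) / n) (((i : ℝ) + 1) / n) := by
    ext u
    simp only [mem_Ico, Finset.mem_range, mem_iUnion, exists_prop]
    constructor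
    · rintro ⟨h0, h1⟩
      refine ⟨⌊(n : ℝ) * u⌋.toNat, ?_, ?_, ?_⟩
      · have : ⌊(n : ℝ) * u⌋ < (n : ℤ) := by
          apply Int.floor_lt.2; push_cast; nlinarith
        omega
      · rw [div_le_iff₀ hn0]
        have h2 : (⌊(n : ℝ) * u⌋.toNat : ℝ) ≤ (n : ℝ) * u := by
          have h3 : (0:ℤ) ≤ ⌊(n : ℝ) * u⌋ := Int.floor_nonneg.2 (by positivity)
          have := Int.floor_le ((n : ℝ) * u)
          calc (⌊(n : ℝ) * u⌋.toNat : ℝ) = ((⌊(n : ℝ) * u⌋ : ℤ) : ℝ) := by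
                exact_mod_cast congrArg (Int.cast : ℤ → ℝ) (Int.toNat_of_nonneg h3)
            _ ≤ (n : ℝ) * u := this
        linarith [mul_comm u (n:ℝ)]
      · rw [lt_div_iff₀ hn0]
        have h3 : (0:ℤ) ≤ ⌊(n : ℝ) * u⌋ := Int.floor_nonneg.2 (by positivity)
        have h4 : (n : ℝ) * u < (⌊(n : ℝ) * u⌋ : ℝ) + 1 := Int.lt_floor_add_one _
        have h5 : ((⌊(n : ℝ) * u⌋ : ℤ) : ℝ) = (⌊(n : ℝ) * u⌋.toNat : ℝ) := by
          exact_mod_cast (congrArg (Int.cast : ℤ → ℝ) (Int.toNat_of_nonneg h3)).symm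
        nlinarith [mul_comm u (n:ℝ)]
    · rintro ⟨i, hi, h1, h2⟩
      constructor
      · have : (0:ℝ) ≤ (i : ℝ) / n := by positivity
        linarith
      · have h3 : ((i : ℝ) + 1) / n ≤ 1 := by
          rw [div_le_one hn0]
          have : (i : ℝ) + 1 ≤ n := by exact_mod_cast hi
          linarith
        linarith
  rw [hunion]
  have hmeas : ∀ i ∈ Finset.range n,
      MeasurableSet (Ico ((i : ℝ) / n) (((i : ℝ) + 1) / n)) := fun i _ => measurableSet_Ico
  have hdisj : Set.Pairwise (↑(Finset.range n))
      (Function.onFun Disjoint fun i : ℕ => Ico ((i : ℝ) / n) (((i : ℝ) + 1) / n)) := by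
    intro i _ j _ hij
    apply Set.Ico_disjoint_Ico.2
    rcases lt_or_gt_of_ne hij with h | h
    · have hij' : ((i : ℝ) + 1) / n ≤ (j : ℝ) / n := by
        apply (div_le_div_iff_of_pos_right hn0).2
        exact_mod_cast h
      exact le_trans (le_trans (min_le_left _ _) hij') (le_max_right _ _)
    · have hij' : ((j : ℝ) + 1) / n ≤ (i : ℝ) / n := by
        apply (div_le_div_iff_of_pos_right hn0).2
        exact_mod_cast h
      exact le_trans (le_trans (min_le_right _ _) hij') (le_max_left _ _)
  have hint : ∀ i ∈ Finset.range n, IntegrableOn (fun u => u - samplePoint n u)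
      (Ico ((i : ℝ) / n) (((i : ℝ) + 1) / n)) volume := by
    intro i hi
    have hcont : IntegrableOn (fun u => u - (i : ℝ) / n)
        (Ico ((i : ℝ) / n) (((i : ℝ) + 1) / n)) volume :=
      ((continuous_id.sub continuous_const).integrableOn_Icc).mono_set Ico_subset_Icc_self
    refine Integrable.congr hcont ?_
    filter_upwards [ae_restrict_mem measurableSet_Ico] with u hu
    rw [samplePoint_eq hn (Finset.mem_range.1 hi) hu]
  rw [integral_biUnion_finset _ hmeas hdisj hint]
  have heach : ∀ i ∈ Finset.range n,
      (∫ u in Ico ((i : ℝ) / n) (((i : ℝ) + 1) / n), (u - samplePoint n u))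
        = 1 / (2 * (n : ℝ) ^ 2) := by
    intro i hi
    have hab : (i : ℝ) / n ≤ ((i : ℝ) + 1) / n := by
      apply (div_le_div_iff_of_pos_right hn0).2; linarith
    have hcongr : (∫ u in Ico ((i : ℝ) / n) (((i : ℝ) + 1) / n), (u - samplePoint n u))
        = ∫ u in Ico ((i : ℝ) / n) (((i : ℝ) + 1) / n), (u - (i : ℝ) / n) := by
      refine setIntegral_congr_fun measurableSet_Ico fun u hu => ?_
      rw [samplePoint_eq hn (Finset.mem_range.1 hi) hu]
    rw [hcongr, MeasureTheory.integral_Ico_eq_integral_Ioo,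
      ← MeasureTheory.integral_Ioc_eq_integral_Ioo, ← intervalIntegral.integral_of_le hab,
      intervalIntegral.integral_sub intervalIntegral.intervalIntegrable_id
        intervalIntegrable_const,
      integral_id, intervalIntegral.integral_const]
    have hne : (n : ℝ) ≠ 0 := ne_of_gt hn0
    field_simp
    ring_nf
    field_simp
    ring
  rw [Finset.sum_congr rfl heach, Finset.sum_const, Finset.card_range, nsmul_eq_mul]
  have hne : (n : ℝ) ≠ 0 := ne_of_gt hn0
  apply le_of_eq
  field_simp


lemma memD_of_bound {D : ℝ → ℝ → ℝ} (hD : Measurable (Function.uncurry D)) {c : ℝ} (hc : 0 ≤ c)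
    (hb : ∀ u ∈ Icc (0:ℝ) 1, ∀ v ∈ Icc (0:ℝ) 1, |D u v| ≤ c) :
    MemLp (fun z : ℝ × ℝ => D z.2 z.1) 2 (μ01.prod μ01) := by
  refine MemLp.of_le (memLp_const c) ((hD.comp measurable_swap).aestronglyMeasurable) ?_
  filter_upwards [ae_mem01_prod] with z hz
  rw [Real.norm_eq_abs, Real.norm_eq_abs, abs_of_nonneg hc]
  exact hb z.2 hz.2 z.1 hz.1

lemma quadform_le_one {K : ℝ → ℝ → ℝ} (hK : Measurable (Function.uncurry K))
    (hKb : ∀ u ∈ Icc (0:ℝ) 1, ∀ v ∈ Icc (0:ℝ) 1, |K u v| ≤ 1)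
    (X : Lp ℝ 2 μ01) (hX : ‖X‖ = 1) : |⟪kernelOp K X, X⟫| ≤ 1 := by
  rw [inner_kernelOp hK hKb X]
  have memD := memD_of_bound hK zero_le_one hKb
  refine le_trans (cs_bound memD X hX) ?_
  have h1 : ∫ z : ℝ × ℝ, (K z.2 z.1) ^ 2 ∂(μ01.prod μ01) ≤ 1 := by
    have hb : ∀ᵐ z : ℝ × ℝ ∂(μ01.prod μ01), (K z.2 z.1) ^ 2 ≤ (1:ℝ) := by
      filter_upwards [ae_mem01_prod] with z hz
      have := hKb z.2 hz.2 z.1 hz.1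
      nlinarith [sq_abs (K z.2 z.1), abs_nonneg (K z.2 z.1)]
    have := integral_mono_ae memD.integrable_sq (integrable_const 1) hb
    simpa using this
  calc Real.sqrt (∫ z : ℝ × ℝ, (K z.2 z.1) ^ 2 ∂(μ01.prod μ01)) ≤ Real.sqrt 1 :=
      Real.sqrt_le_sqrt h1
    _ = 1 := Real.sqrt_one

/-- Let `W` be an `A₁`-Lipschitz graphon, `Wₙ(u,v) = W(uᵢ,uⱼ)` the step graphon
induced by sampling `W` at the `n` regularly spaced points `uᵢ = (i-1)/n`, and `T_W`, `T_{Wₙ}`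
the corresponding integral operators on `L²([0,1])`.  Then for every `k ≥ 1`, the
Courant–Fischer min-max values satisfy `|λ_k(T_W) - λ_k(T_{Wₙ})| ≤ √A₁ / √n`. -/
theorem graphon_step_eigenvalue_bound
    (W : ℝ → ℝ → ℝ) (A₁ : ℝ)
    (hWmeas : Measurable (Function.uncurry W))
    (hWrange : ∀ u ∈ Icc (0:ℝ) 1, ∀ v ∈ Icc (0:ℝ) 1, W u v ∈ Icc (0:ℝ) 1)
    (hWsym : ∀ u ∈ Icc (0:ℝ) 1, ∀ v ∈ Icc (0:ℝ) 1, W u v = W v u)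
    (hLip : ∀ u₁ ∈ Icc (0:ℝ) 1, ∀ v₁ ∈ Icc (0:ℝ) 1, ∀ u₂ ∈ Icc (0:ℝ) 1, ∀ v₂ ∈ Icc (0:ℝ) 1,
      |W u₂ v₂ - W u₁ v₁| ≤ A₁ * (|u₂ - u₁| + |v₂ - v₁|))
    (n : ℕ) (hn : 1 ≤ n) (k : ℕ) (hk : 1 ≤ k) :
    |minmaxValue (kernelOp W) k
        - minmaxValue (kernelOp (fun u v => W (samplePoint n u) (samplePoint n v))) k|
      ≤ Real.sqrt A₁ / Real.sqrt n := by
  have hn0 : (0:ℝ) < n := by exact_mod_cast Nat.pos_of_ne_zero (by omega)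
  have hA : 0 ≤ A₁ := by
    have h := hLip 0 (by norm_num) 0 (by norm_num) 1 (by norm_num) 0 (by norm_num)
    have h2 : (0:ℝ) ≤ |W 1 0 - W 0 0| := abs_nonneg _
    have h3 : |(1:ℝ) - 0| + |(0:ℝ) - 0| = 1 := by norm_num
    rw [h3] at h; linarith
  set Wn : ℝ → ℝ → ℝ := fun u v => W (samplePoint n u) (samplePoint n v) with hWn
  have hWnmeas : Measurable (Function.uncurry Wn) := by
    have : Function.uncurry Wn
        = Function.uncurry W ∘ fun p : ℝ × ℝ => (samplePoint n p.1, samplePoint n p.2) :=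
      rfl
    rw [this]
    exact hWmeas.comp (((measurable_samplePoint n).comp measurable_fst).prodMk
      ((measurable_samplePoint n).comp measurable_snd))
  have hWb : ∀ u ∈ Icc (0:ℝ) 1, ∀ v ∈ Icc (0:ℝ) 1, |W u v| ≤ 1 := by
    intro u hu v hv
    have h := hWrange u hu v hv
    rw [abs_le]; exact ⟨by linarith [h.1], h.2⟩
  have hWnb : ∀ u ∈ Icc (0:ℝ) 1, ∀ v ∈ Icc (0:ℝ) 1, |Wn u v| ≤ 1 := fun u hu v hv =>
    hWb _ (samplePoint_mem hn hu) _ (samplePoint_mem hn hv)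
  -- the key integral bound
  have hB4 : ∫ z : ℝ × ℝ, (W z.2 z.1 - Wn z.2 z.1) ^ 2 ∂(μ01.prod μ01) ≤ A₁ / n := by
    set φ : ℝ → ℝ := fun u => u - samplePoint n u with hφdef
    have hφmeas : Measurable φ := measurable_id.sub (measurable_samplePoint n)
    have hφint : Integrable φ μ01 := by
      refine (integrable_const (1:ℝ)).mono' hφmeas.aestronglyMeasurable ?_
      filter_upwards [ae_mem01] with u hu
      have h1 := samplePoint_le hn u
      have h2 := (samplePoint_mem hn hu).1
      have hnn : (0:ℝ) ≤ φ u := by simp only [hφdef]; linarith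
      have hub : φ u ≤ 1 := by simp only [hφdef]; linarith [hu.2]
      rw [Real.norm_eq_abs, abs_of_nonneg hnn]
      refine le_trans hub ?_
      simp
    have hφ1 : Integrable (fun z : ℝ × ℝ => φ z.1) (μ01.prod μ01) := by
      have := hφint.mul_prod (integrable_const (μ := μ01) (1:ℝ))
      refine this.congr (Filter.Eventually.of_forall fun z => ?_)
      simp
    have hφ2 : Integrable (fun z : ℝ × ℝ => φ z.2) (μ01.prod μ01) := by
      have := (integrable_const (μ := μ01) (1:ℝ)).mul_prod hφint
      refine this.congr (Filter.Eventually.of_forall fun z => ?_)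
      simp
    have hDmeas : Measurable (Function.uncurry fun u v => W u v - Wn u v) := by
      have : Function.uncurry (fun u v => W u v - Wn u v)
          = fun p : ℝ × ℝ => Function.uncurry W p - Function.uncurry Wn p := rfl
      rw [this]; exact hWmeas.sub hWnmeas
    have hDb : ∀ u ∈ Icc (0:ℝ) 1, ∀ v ∈ Icc (0:ℝ) 1, |W u v - Wn u v| ≤ 2 := by
      intro u hu v hv
      have h1 := hWrange u hu v hv
      have h2 := hWrange _ (samplePoint_mem hn hu) _ (samplePoint_mem hn hv)
      rw [abs_le]
      constructor <;> [skip; skip] <;> simp only [hWn] <;>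
        [linarith [h1.1, h2.2]; linarith [h1.2, h2.1]]
    have memD : MemLp (fun z : ℝ × ℝ => W z.2 z.1 - Wn z.2 z.1) 2 (μ01.prod μ01) :=
      memD_of_bound hDmeas (by norm_num) hDb
    have hmono : ∫ z : ℝ × ℝ, (W z.2 z.1 - Wn z.2 z.1) ^ 2 ∂(μ01.prod μ01)
        ≤ ∫ z : ℝ × ℝ, A₁ * (φ z.1 + φ z.2) ∂(μ01.prod μ01) := by
      refine integral_mono_ae memD.integrable_sq ((hφ1.add hφ2).const_mul A₁) ?_
      filter_upwards [ae_mem01_prod] with z hz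
      have hz1 := hz.1; have hz2 := hz.2
      have hs1 := samplePoint_mem hn hz1
      have hs2 := samplePoint_mem hn hz2
      have hW1 := hWrange z.2 hz2 z.1 hz1
      have hW2 := hWrange _ hs2 _ hs1
      have habs : |W z.2 z.1 - Wn z.2 z.1| ≤ 1 := by
        rw [abs_le]
        constructor <;> simp only [hWn] <;> [linarith [hW1.1, hW2.2]; linarith [hW1.2, hW2.1]]
      have hlip := hLip (samplePoint n z.2) hs2 (samplePoint n z.1) hs1 z.2 hz2 z.1 hz1
      have ha1 : |z.2 - samplePoint n z.2| = z.2 - samplePoint n z.2 :=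
        abs_of_nonneg (sub_nonneg.2 (samplePoint_le hn _))
      have ha2 : |z.1 - samplePoint n z.1| = z.1 - samplePoint n z.1 :=
        abs_of_nonneg (sub_nonneg.2 (samplePoint_le hn _))
      rw [ha1, ha2] at hlip
      have hφval : A₁ * (φ z.1 + φ z.2)
          = A₁ * ((z.2 - samplePoint n z.2) + (z.1 - samplePoint n z.1)) := by
        simp only [hφdef]; ring
      rw [hφval]
      have hD2 : (W z.2 z.1 - Wn z.2 z.1) ^ 2 ≤ |W z.2 z.1 - Wn z.2 z.1| := by
        nlinarith [sq_abs (W z.2 z.1 - Wn z.2 z.1), abs_nonneg (W z.2 z.1 - Wn z.2 z.1)]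
      calc (W z.2 z.1 - Wn z.2 z.1) ^ 2 ≤ |W z.2 z.1 - Wn z.2 z.1| := hD2
        _ ≤ A₁ * ((z.2 - samplePoint n z.2) + (z.1 - samplePoint n z.1)) := by
            simpa only [hWn] using hlip
    have hval : ∫ z : ℝ × ℝ, A₁ * (φ z.1 + φ z.2) ∂(μ01.prod μ01)
        = A₁ * ((∫ u, φ u ∂μ01) + (∫ u, φ u ∂μ01)) := by
      rw [MeasureTheory.integral_const_mul, integral_add hφ1 hφ2]
      congr 1
      have e1 : ∫ z : ℝ × ℝ, φ z.1 ∂(μ01.prod μ01) = ∫ u, φ u ∂μ01 := by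
        have h : (fun z : ℝ × ℝ => φ z.1) = fun z : ℝ × ℝ => φ z.1 * (fun _ : ℝ => (1:ℝ)) z.2 := by
          funext z; simp
        rw [h, MeasureTheory.integral_prod_mul (f := φ) (g := fun _ : ℝ => (1:ℝ))]
        simp
      have e2 : ∫ z : ℝ × ℝ, φ z.2 ∂(μ01.prod μ01) = ∫ u, φ u ∂μ01 := by
        have h : (fun z : ℝ × ℝ => φ z.2) = fun z : ℝ × ℝ => (fun _ : ℝ => (1:ℝ)) z.1 * φ z.2 := by
          funext z; simp
        rw [h, MeasureTheory.integral_prod_mul (f := fun _ : ℝ => (1:ℝ)) (g := φ)]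
        simp
      rw [e1, e2]
    have hI := sample_integral hn
    calc ∫ z : ℝ × ℝ, (W z.2 z.1 - Wn z.2 z.1) ^ 2 ∂(μ01.prod μ01)
        ≤ A₁ * ((∫ u, φ u ∂μ01) + (∫ u, φ u ∂μ01)) := hmono.trans (le_of_eq hval)
      _ ≤ A₁ * (1 / (2 * n) + 1 / (2 * n)) := by
          apply mul_le_mul_of_nonneg_left (add_le_add hI hI) hA
      _ = A₁ / n := by field_simp; ring
  -- difference of quadratic forms
  have hdiff : ∀ X : Lp ℝ 2 μ01, ‖X‖ = 1 →
      |⟪kernelOp W X, X⟫ - ⟪kernelOp Wn X, X⟫| ≤ Real.sqrt (A₁ / n) := by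
    intro X hX
    rw [inner_kernelOp hWmeas hWb X, inner_kernelOp hWnmeas hWnb X,
      ← integral_sub (integrable_F hWmeas hWb X) (integrable_F hWnmeas hWnb X)]
    have hDmeas : Measurable (Function.uncurry fun u v => W u v - Wn u v) := by
      have : Function.uncurry (fun u v => W u v - Wn u v)
          = fun p : ℝ × ℝ => Function.uncurry W p - Function.uncurry Wn p := rfl
      rw [this]; exact hWmeas.sub hWnmeas
    have hDb : ∀ u ∈ Icc (0:ℝ) 1, ∀ v ∈ Icc (0:ℝ) 1, |W u v - Wn u v| ≤ 2 := by
      intro u hu v hv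
      have h1 := hWrange u hu v hv
      have h2 := hWrange _ (samplePoint_mem hn hu) _ (samplePoint_mem hn hv)
      rw [abs_le]
      constructor <;> simp only [hWn] <;> [linarith [h1.1, h2.2]; linarith [h1.2, h2.1]]
    have memD : MemLp (fun z : ℝ × ℝ => (fun u v => W u v - Wn u v) z.2 z.1) 2 (μ01.prod μ01) :=
      memD_of_bound hDmeas (by norm_num) hDb
    have hcongr : (fun z : ℝ × ℝ =>
        W z.2 z.1 * (X : ℝ → ℝ) z.2 * (X : ℝ → ℝ) z.1
          - Wn z.2 z.1 * (X : ℝ → ℝ) z.2 * (X : ℝ → ℝ) z.1)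
        = fun z : ℝ × ℝ =>
          (fun u v => W u v - Wn u v) z.2 z.1 * (X : ℝ → ℝ) z.2 * (X : ℝ → ℝ) z.1 := by
      funext z; ring
    rw [hcongr]
    refine le_trans (cs_bound (D := fun u v => W u v - Wn u v) memD X hX) ?_
    refine Real.sqrt_le_sqrt ?_
    simpa using hB4
  have hmain := minmax_abs_diff_le (kernelOp W) (kernelOp Wn) k (Real.sqrt (A₁ / n)) 1
    (Real.sqrt_nonneg _) (fun X hX => quadform_le_one hWmeas hWb X hX)
    (fun X hX => quadform_le_one hWnmeas hWnb X hX) hdiff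
  calc |minmaxValue (kernelOp W) k - minmaxValue (kernelOp Wn) k| ≤ Real.sqrt (A₁ / n) := hmain
    _ = Real.sqrt A₁ / Real.sqrt n := Real.sqrt_div hA n
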